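/- Let L be an n×n Laplacian matrix with eigenprojection J̄ = L^⊢, and let y⁰ ∈ ℝ^{n+1}. For each δ > 0 let v(δ) ∈ ℝⁿ have nonnegative entries with s(δ) = Σᵢ v(δ)ᵢ > 0, and suppose δ/s(δ) → 0 and v(δ)/s(δ) → ṽ as δ → 0⁺. Then the double limit lim_{δ→0⁺} lim_{t→∞} exp(−t(L₀ + H_{δ,v(δ)}))·y⁰ equals the constant vector c·1′ with c = Σ_{j=1}^n (ṽᵀJ̄)_j · y⁰_j; in particular the initial state y⁰_{n+1} of the hub has no influence on the consensus. -/

import Mathlib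

open Matrix Filter Topology

/-- The index of a square real matrix: the smallest `k` with
`rank (A^(k+1)) = rank (A^k)`. -/
noncomputable def matIndex {m : Type*} [Fintype m] [DecidableEq m]
    (A : Matrix m m ℝ) : ℕ :=
  sInf {k : ℕ | (A ^ (k + 1)).rank = (A ^ k).rank}

/-- `Q` is the eigenprojection of `A` corresponding to the eigenvalue `0`:
an idempotent matrix whose range is the null space of `A ^ ind A` and whose
null space is the range of `A ^ ind A`. -/
def IsEigenprojection {m : Type*} [Fintype m] [DecidableEq m]
    (A Q : Matrix m m ℝ) : Prop :=
  Q * Q = Q ∧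
  LinearMap.range Q.mulVecLin = LinearMap.ker (A ^ matIndex A).mulVecLin ∧
  LinearMap.ker Q.mulVecLin = LinearMap.range (A ^ matIndex A).mulVecLin

/-- A Laplacian matrix: nonpositive off-diagonal entries and zero row sums. -/
def IsLaplacian {m : Type*} [Fintype m] (L : Matrix m m ℝ) : Prop :=
  (∀ i j, i ≠ j → L i j ≤ 0) ∧ ∀ i, ∑ j, L i j = 0

/-- The block matrix `L₀ = [[L, 0], [0ᵀ, 0]]`. -/
def hubL0 {n : ℕ} (L : Matrix (Fin n) (Fin n) ℝ) :
    Matrix (Fin n ⊕ Unit) (Fin n ⊕ Unit) ℝ :=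
  Matrix.fromBlocks L 0 0 0

/-- The block matrix `H_I = [[I, -1], [0ᵀ, 0]]`. -/
def hubHI (n : ℕ) : Matrix (Fin n ⊕ Unit) (Fin n ⊕ Unit) ℝ :=
  Matrix.fromBlocks 1 (Matrix.of fun _ _ => (-1 : ℝ)) 0 0

/-- The block matrix `H_v = [[0, 0], [-vᵀ, s]]` where `s = Σᵢ vᵢ`. -/
def hubHv {n : ℕ} (v : Fin n → ℝ) : Matrix (Fin n ⊕ Unit) (Fin n ⊕ Unit) ℝ :=
  Matrix.fromBlocks 0 0 (Matrix.of fun _ j => -v j) (Matrix.of fun _ _ => ∑ i, v i)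

/-- `H_{δ,v} = δ·H_I + H_v`. -/
def hubH {n : ℕ} (δ : ℝ) (v : Fin n → ℝ) :
    Matrix (Fin n ⊕ Unit) (Fin n ⊕ Unit) ℝ :=
  δ • hubHI n + hubHv v


section Aux
variable {n : ℕ} {L J : Matrix (Fin n) (Fin n) ℝ}

lemma stoch_mulVec_norm_le {P : Matrix (Fin n) (Fin n) ℝ}
    (h0 : ∀ i j, 0 ≤ P i j) (h1 : ∀ i, ∑ j, P i j = 1) (x : Fin n → ℝ) :
    ‖P *ᵥ x‖ ≤ ‖x‖ := by
  rw [pi_norm_le_iff_of_nonneg (norm_nonneg x)]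
  intro i
  calc ‖(P *ᵥ x) i‖ = |∑ j, P i j * x j| := rfl
    _ ≤ ∑ j, |P i j * x j| := Finset.abs_sum_le_sum_abs _ _
    _ ≤ ∑ j, P i j * ‖x‖ := by
        refine Finset.sum_le_sum fun j _ => ?_
        rw [abs_mul, abs_of_nonneg (h0 i j)]
        exact mul_le_mul_of_nonneg_left (norm_le_pi_norm x j) (h0 i j)
    _ = ‖x‖ := by rw [← Finset.sum_mul, h1 i, one_mul]

lemma laplacian_diag_nonneg {L : Matrix (Fin n) (Fin n) ℝ} (hL : IsLaplacian L) (i : Fin n) :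
    0 ≤ L i i := by
  have h := hL.2 i
  rw [← Finset.add_sum_erase _ _ (Finset.mem_univ i)] at h
  have : ∑ j ∈ Finset.univ.erase i, L i j ≤ 0 :=
    Finset.sum_nonpos fun j hj => hL.1 i j (Finset.ne_of_mem_erase hj).symm
  linarith

/-- The stochastic matrix associated to a Laplacian. -/
lemma laplacian_stoch {L : Matrix (Fin n) (Fin n) ℝ} (hL : IsLaplacian L) :
    ∃ ε : ℝ, 0 < ε ∧ (∀ i j, 0 ≤ (1 - ε • L) i j) ∧ (∀ i, ∑ j, (1 - ε • L) i j = 1) := by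
  set S := ∑ i, L i i with hS
  have hS0 : 0 ≤ S := Finset.sum_nonneg fun i _ => laplacian_diag_nonneg hL i
  refine ⟨(1 + S)⁻¹, by positivity, fun i j => ?_, fun i => ?_⟩
  · rcases eq_or_ne i j with rfl | hij
    · have hii : L i i ≤ S := Finset.single_le_sum (fun k _ => laplacian_diag_nonneg hL k)
        (Finset.mem_univ i)
      have h1 : (1 + S)⁻¹ * L i i ≤ (1 + S)⁻¹ * (1 + S) := by
        apply mul_le_mul_of_nonneg_left (by linarith) (by positivity)
      rw [inv_mul_cancel₀ (by positivity)] at h1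
      simp only [Matrix.sub_apply, Matrix.smul_apply, Matrix.one_apply_eq, smul_eq_mul]
      linarith
    · have := hL.1 i j hij
      simp only [Matrix.sub_apply, Matrix.smul_apply, Matrix.one_apply_ne hij, smul_eq_mul]
      have : (1 + S)⁻¹ * L i j ≤ 0 := mul_nonpos_of_nonneg_of_nonpos (by positivity) this
      linarith
  · simp [Finset.sum_sub_distrib, ← Finset.mul_sum, hL.2 i, Matrix.one_apply,
      Finset.sum_ite_eq]

lemma stoch_pow {P : Matrix (Fin n) (Fin n) ℝ}
    (h0 : ∀ i j, 0 ≤ P i j) (h1 : ∀ i, ∑ j, P i j = 1) (m : ℕ) :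
    (∀ i j, 0 ≤ (P ^ m) i j) ∧ (∀ i, ∑ j, (P ^ m) i j = 1) := by
  induction m with
  | zero => simp [Matrix.one_apply, Finset.sum_ite_eq]; intro i j; positivity
  | succ m ih =>
    constructor
    · intro i j
      rw [pow_succ, Matrix.mul_apply]
      exact Finset.sum_nonneg fun k _ => mul_nonneg (ih.1 i k) (h0 k j)
    · intro i
      simp only [pow_succ, Matrix.mul_apply]
      rw [Finset.sum_comm]
      simp_rw [← Finset.mul_sum, h1]
      simpa using ih.2 i

lemma laplacian_ker_sq {L : Matrix (Fin n) (Fin n) ℝ} (hL : IsLaplacian L)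
    {x : Fin n → ℝ} (hx : L *ᵥ (L *ᵥ x) = 0) : L *ᵥ x = 0 := by
  obtain ⟨ε, hε, h0, h1⟩ := laplacian_stoch hL
  set P := 1 - ε • L with hP
  set y := L *ᵥ x with hy
  have hPy : P *ᵥ y = y := by
    rw [hP, Matrix.sub_mulVec, Matrix.one_mulVec, Matrix.smul_mulVec, hy,
      Matrix.mulVec_mulVec]
    rw [show (L * L) *ᵥ x = 0 by rw [← Matrix.mulVec_mulVec]; exact hx]
    simp
  have hPmy : ∀ m : ℕ, (P ^ m) *ᵥ y = y := by
    intro m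
    induction m with
    | zero => simp
    | succ k ihk => rw [pow_succ, ← Matrix.mulVec_mulVec, hPy, ihk]
  have key : ∀ m : ℕ, (P ^ m) *ᵥ x = x - (m * ε) • y := by
    intro m
    induction m with
    | zero => simp
    | succ m ih =>
      rw [pow_succ, ← Matrix.mulVec_mulVec]
      have hPx : P *ᵥ x = x - ε • y := by
        rw [hP, Matrix.sub_mulVec, Matrix.one_mulVec, Matrix.smul_mulVec, ← hy]
      rw [hPx, Matrix.mulVec_sub, ih, Matrix.mulVec_smul, hPmy m]
      push_cast
      module
  by_contra hy0
  have hy0' : 0 < ‖y‖ := by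
    simpa [norm_pos_iff] using hy0
  obtain ⟨m, hm⟩ := exists_nat_gt (2 * ‖x‖ / (ε * ‖y‖))
  have hb : ‖(P ^ m) *ᵥ x‖ ≤ ‖x‖ :=
    stoch_mulVec_norm_le (stoch_pow h0 h1 m).1 (stoch_pow h0 h1 m).2 x
  rw [key m] at hb
  have h2 : ‖(m * ε : ℝ) • y‖ - ‖x‖ ≤ ‖x‖ := by
    calc ‖(m * ε : ℝ) • y‖ - ‖x‖ ≤ ‖x - (m * ε : ℝ) • y‖ := by
          have := norm_sub_norm_le ((m * ε : ℝ) • y) x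
          rw [← norm_neg ((m * ε : ℝ) • y - x)] at this
          simpa [neg_sub] using this
      _ ≤ ‖x‖ := hb
  rw [norm_smul, Real.norm_eq_abs, abs_of_nonneg (by positivity)] at h2
  have : (m : ℝ) * ε * ‖y‖ ≤ 2 * ‖x‖ := by linarith
  rw [div_lt_iff₀ (by positivity)] at hm
  nlinarith

lemma eigenproj_spec (hker2 : ∀ x : Fin n → ℝ, L *ᵥ (L *ᵥ x) = 0 → L *ᵥ x = 0)
    (hJ : IsEigenprojection L J) :
    LinearMap.range J.mulVecLin = LinearMap.ker L.mulVecLin ∧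
    LinearMap.ker J.mulVecLin = LinearMap.range L.mulVecLin := by
  have hksq : LinearMap.ker (L ^ 2).mulVecLin = LinearMap.ker L.mulVecLin := by
    ext x
    simp only [LinearMap.mem_ker, Matrix.mulVecLin_apply]
    constructor
    · intro h
      exact hker2 x (by rwa [Matrix.mulVec_mulVec, ← pow_two])
    · intro h
      rw [pow_two, ← Matrix.mulVec_mulVec, h, Matrix.mulVec_zero]
  have hrk : (L ^ (1 + 1)).rank = (L ^ 1).rank := by
    have h1 := LinearMap.finrank_range_add_finrank_ker (L ^ 2).mulVecLin
    have h2 := LinearMap.finrank_range_add_finrank_ker (L ^ 1).mulVecLin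
    rw [hksq] at h1
    rw [pow_one] at h2 ⊢
    have : (L ^ 2).rank = Module.finrank ℝ (LinearMap.range (L ^ 2).mulVecLin) := rfl
    rw [show (L^(1+1) : Matrix (Fin n) (Fin n) ℝ) = L ^ 2 by norm_num]
    have hL2 : (L ^ 2).rank + Module.finrank ℝ (LinearMap.ker L.mulVecLin)
        = L.rank + Module.finrank ℝ (LinearMap.ker L.mulVecLin) := by
      rw [Matrix.rank, Matrix.rank, h1, h2]
    exact Nat.add_right_cancel hL2
  have hle : matIndex L ≤ 1 := Nat.sInf_le hrk
  have hcases : matIndex L = 0 ∨ matIndex L = 1 := by omega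
  obtain ⟨hQQ, hr, hk⟩ := hJ
  rcases hcases with h0 | h1
  · -- L is invertible
    rw [h0, pow_zero] at hr hk
    have hne : {k : ℕ | (L ^ (k + 1)).rank = (L ^ k).rank}.Nonempty := ⟨1, hrk⟩
    have hmem := Nat.sInf_mem hne
    rw [show sInf {k : ℕ | (L ^ (k + 1)).rank = (L ^ k).rank} = matIndex L from rfl, h0] at hmem
    simp only [Set.mem_setOf_eq, zero_add, pow_one, pow_zero] at hmem
    -- hmem : L.rank = (1 : Matrix).rank = n
    have hrkL : L.rank = n := by rw [hmem, Matrix.rank_one, Fintype.card_fin]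
    have hkerL : LinearMap.ker L.mulVecLin = ⊥ := by
      have h2 := LinearMap.finrank_range_add_finrank_ker L.mulVecLin
      rw [show Module.finrank ℝ (LinearMap.range L.mulVecLin) = L.rank from rfl, hrkL] at h2
      simp only [Module.finrank_fintype_fun_eq_card, Fintype.card_fin] at h2
      have : Module.finrank ℝ (LinearMap.ker L.mulVecLin) = 0 := by omega
      exact Submodule.finrank_eq_zero.mp this
    have hrangeL : LinearMap.range L.mulVecLin = ⊤ := by
      rw [LinearMap.range_eq_top]
      exact LinearMap.injective_iff_surjective.mp (LinearMap.ker_eq_bot.mp hkerL)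
    rw [Matrix.mulVecLin_one] at hr hk
    rw [hr, hk]
    constructor
    · rw [hkerL, LinearMap.ker_id]
    · rw [hrangeL, LinearMap.range_id]
  · rw [h1, pow_one] at hr hk
    exact ⟨hr, hk⟩

lemma mat_eq_zero_of_mulVec (A : Matrix (Fin n) (Fin n) ℝ) (h : ∀ x, A *ᵥ x = 0) : A = 0 := by
  ext i j
  simpa using congrFun (h (Pi.single j 1)) i

lemma eigen_matrix_facts
    (hrange : LinearMap.range J.mulVecLin = LinearMap.ker L.mulVecLin)
    (hker : LinearMap.ker J.mulVecLin = LinearMap.range L.mulVecLin)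
    (hQQ : J * J = J) :
    L * J = 0 ∧ J * L = 0 ∧ IsUnit (L + J) := by
  have hLJ : L * J = 0 := by
    apply mat_eq_zero_of_mulVec
    intro x
    have hx : J.mulVecLin x ∈ LinearMap.ker L.mulVecLin := by
      rw [← hrange]; exact LinearMap.mem_range_self _ x
    simpa [Matrix.mulVecLin_apply, Matrix.mulVec_mulVec] using hx
  have hJL : J * L = 0 := by
    apply mat_eq_zero_of_mulVec
    intro x
    have hx : L.mulVecLin x ∈ LinearMap.ker J.mulVecLin := by
      rw [hker]; exact LinearMap.mem_range_self _ x
    simpa [Matrix.mulVecLin_apply, Matrix.mulVec_mulVec] using hx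
  refine ⟨hLJ, hJL, ?_⟩
  rw [← Matrix.mulVec_injective_iff_isUnit]
  intro x y hxy
  -- suffices: kernel trivial
  have key : ∀ z, (L + J) *ᵥ z = 0 → z = 0 := by
    intro z hz
    have hz' : (L + J) *ᵥ z = L *ᵥ z + J *ᵥ z := Matrix.add_mulVec _ _ _
    have hJz : J *ᵥ (L *ᵥ z + J *ᵥ z) = 0 := by rw [← hz', hz, Matrix.mulVec_zero]
    rw [Matrix.mulVec_add, Matrix.mulVec_mulVec, Matrix.mulVec_mulVec, hJL, hQQ,
      Matrix.zero_mulVec, zero_add] at hJz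
    -- hJz : J *ᵥ z = 0
    have hLz : L *ᵥ z = 0 := by
      have := hz'.symm.trans hz
      rw [hJz, add_zero] at this
      exact this
    -- z ∈ ker L = range J
    have hzr : z ∈ LinearMap.range J.mulVecLin := by
      rw [hrange]; simpa [Matrix.mulVecLin_apply] using hLz
    obtain ⟨u, hu⟩ := hzr
    have : J *ᵥ z = z := by
      rw [← hu]
      simp only [Matrix.mulVecLin_apply, Matrix.mulVec_mulVec, hQQ]
    rw [hJz] at this
    exact this.symm
  have := key (x - y) (by rw [Matrix.mulVec_sub, hxy, sub_self])
  exact sub_eq_zero.mp this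

lemma resolvent_eq (hLJ : L * J = 0) (hQQ : J * J = J) (hJL : J * L = 0)
    {δ : ℝ} (hδ : δ ≠ 0) (hd : 1 + δ ≠ 0)
    (hB : IsUnit (L + J + δ • (1 : Matrix (Fin n) (Fin n) ℝ)).det) :
    (L + δ • (1 : Matrix (Fin n) (Fin n) ℝ)) *
      (δ⁻¹ • J + (L + J + δ • 1)⁻¹ * (1 - J)) = 1 := by
  set B : Matrix (Fin n) (Fin n) ℝ := L + J + δ • 1 with hBdef
  have hBinv : B * B⁻¹ = 1 := Matrix.mul_nonsing_inv _ hB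
  have hJB : J * B = (1 + δ) • J := by
    rw [hBdef, Matrix.mul_add, Matrix.mul_add, hJL, hQQ, Matrix.mul_smul, Matrix.mul_one]
    rw [add_smul, one_smul, zero_add]
  have hJBinv : J * B⁻¹ = (1 + δ)⁻¹ • J := by
    have h := congrArg (fun M => (1 + δ)⁻¹ • (M * B⁻¹)) hJB
    simp only [Matrix.smul_mul, mul_assoc, hBinv, Matrix.mul_one] at h
    rw [smul_smul, inv_mul_cancel₀ hd, one_smul] at h
    rw [← h]
  have hA : L + δ • (1 : Matrix (Fin n) (Fin n) ℝ) = B - J := by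
    rw [hBdef]; abel
  have hAJ : (L + δ • (1 : Matrix (Fin n) (Fin n) ℝ)) * J = δ • J := by
    rw [Matrix.add_mul, hLJ, Matrix.smul_mul, Matrix.one_mul, zero_add]
  have hJ1J : J * (1 - J) = 0 := by rw [Matrix.mul_sub, Matrix.mul_one, hQQ, sub_self]
  rw [Matrix.mul_add, Matrix.mul_smul, hAJ, smul_smul, inv_mul_cancel₀ hδ, one_smul]
  rw [hA, Matrix.sub_mul, ← Matrix.mul_assoc, hBinv, Matrix.one_mul, ← Matrix.mul_assoc, hJBinv,
    Matrix.smul_mul, hJ1J, smul_zero, sub_zero]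
  abel

lemma det_unit_eventually (hU : IsUnit (L + J)) :
    ∀ᶠ δ : ℝ in 𝓝[>] 0, IsUnit (L + J + δ • (1 : Matrix (Fin n) (Fin n) ℝ)).det := by
  have hBcont : Continuous fun δ : ℝ => L + J + δ • (1 : Matrix (Fin n) (Fin n) ℝ) :=
    continuous_const.add (continuous_id.smul continuous_const)
  have hdet : Continuous fun δ : ℝ => (L + J + δ • (1 : Matrix (Fin n) (Fin n) ℝ)).det :=
    hBcont.matrix_det
  have h0 : (L + J + (0:ℝ) • (1 : Matrix (Fin n) (Fin n) ℝ)).det ≠ 0 := by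
    simpa using ((Matrix.isUnit_iff_isUnit_det _).mp hU).ne_zero
  have : ∀ᶠ δ : ℝ in 𝓝 (0:ℝ), (L + J + δ • (1 : Matrix (Fin n) (Fin n) ℝ)).det ≠ 0 :=
    hdet.continuousAt.eventually_ne h0
  filter_upwards [nhdsWithin_le_nhds this] with δ hδ
  exact isUnit_iff_ne_zero.mpr hδ

lemma resolvent_tendsto (hLJ : L * J = 0) (hQQ : J * J = J) (hJL : J * L = 0)
    (hU : IsUnit (L + J)) :
    Tendsto (fun δ : ℝ => δ • (L + δ • (1 : Matrix (Fin n) (Fin n) ℝ))⁻¹) (𝓝[>] 0) (𝓝 J) := by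
  have hBcont : Continuous fun δ : ℝ => L + J + δ • (1 : Matrix (Fin n) (Fin n) ℝ) :=
    continuous_const.add (continuous_id.smul continuous_const)
  have hdet0 : IsUnit (L + J + (0:ℝ) • (1 : Matrix (Fin n) (Fin n) ℝ)).det := by
    simpa using (Matrix.isUnit_iff_isUnit_det _).mp hU
  have hinv : ContinuousAt Inv.inv (L + J + (0:ℝ) • (1 : Matrix (Fin n) (Fin n) ℝ)) := by
    apply continuousAt_matrix_inv
    rw [Ring.inverse_eq_inv']
    exact continuousAt_inv₀ hdet0.ne_zero
  have hF : ContinuousAt (fun δ : ℝ =>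
      J + δ • ((L + J + δ • (1 : Matrix (Fin n) (Fin n) ℝ))⁻¹ * (1 - J))) 0 := by
    apply ContinuousAt.add continuousAt_const
    apply ContinuousAt.smul continuousAt_id
    have hcomp : ContinuousAt (fun δ : ℝ => (L + J + δ • (1 : Matrix (Fin n) (Fin n) ℝ))⁻¹) 0 :=
      ContinuousAt.comp (g := Inv.inv)
        (f := fun δ : ℝ => L + J + δ • (1 : Matrix (Fin n) (Fin n) ℝ)) hinv hBcont.continuousAt
    exact hcomp.mul continuousAt_const
  have hF0 : Tendsto (fun δ : ℝ =>
      J + δ • ((L + J + δ • (1 : Matrix (Fin n) (Fin n) ℝ))⁻¹ * (1 - J))) (𝓝[>] 0) (𝓝 J) := by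
    have := hF.tendsto.mono_left (nhdsWithin_le_nhds (s := Set.Ioi (0:ℝ)))
    simpa using this
  apply hF0.congr'
  filter_upwards [det_unit_eventually hU, self_mem_nhdsWithin] with δ hdet hδ
  rw [Set.mem_Ioi] at hδ
  have hd : 1 + δ ≠ 0 := by positivity
  have h1 := resolvent_eq hLJ hQQ hJL hδ.ne' hd hdet
  have hAinv : (L + δ • (1 : Matrix (Fin n) (Fin n) ℝ))⁻¹
      = δ⁻¹ • J + (L + J + δ • 1)⁻¹ * (1 - J) := Matrix.inv_eq_right_inv h1
  rw [hAinv, smul_add, smul_smul, mul_inv_cancel₀ hδ.ne', one_smul]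

lemma hubM_eq (δ : ℝ) (vδ : Fin n → ℝ) :
    hubL0 L + hubH δ vδ =
      Matrix.fromBlocks (L + δ • 1) (Matrix.of fun _ _ => -δ)
        (Matrix.of fun _ j => -vδ j) (Matrix.of fun _ _ => ∑ i, vδ i) := by
  ext i j
  rcases i with i | i <;> rcases j with j | j <;>
    simp [hubL0, hubHI, hubHv, hubH, Matrix.fromBlocks]

lemma null_vecMul (hrow : ∀ i, ∑ j, L i j = 0) {δ : ℝ} (hδ : δ ≠ 0) (vδ : Fin n → ℝ)
    (hA : (L + δ • 1)⁻¹ * (L + δ • 1) = 1 ∧ (L + δ • 1) * (L + δ • 1)⁻¹ = 1) :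
    (Sum.elim (vδ ᵥ* (L + δ • 1)⁻¹) (fun _ => (1:ℝ))) ᵥ* (hubL0 L + hubH δ vδ) = 0 := by
  set A : Matrix (Fin n) (Fin n) ℝ := L + δ • 1 with hAdef
  set u : Fin n → ℝ := vδ ᵥ* A⁻¹ with hu
  have hA1 : A *ᵥ (fun _ => (1:ℝ)) = fun _ => δ := by
    funext i
    show ∑ j, A i j * 1 = δ
    simp only [mul_one, hAdef, Matrix.add_apply, Matrix.smul_apply, smul_eq_mul]
    rw [Finset.sum_add_distrib, hrow i, zero_add]
    simp [Matrix.one_apply]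
  have hAinv1 : A⁻¹ *ᵥ (fun _ => (1:ℝ)) = δ⁻¹ • (fun _ => (1:ℝ)) := by
    have := congrArg (fun x => A⁻¹ *ᵥ x) hA1
    rw [Matrix.mulVec_mulVec, hA.1, Matrix.one_mulVec] at this
    rw [show (fun _ : Fin n => δ) = δ • (fun _ : Fin n => (1:ℝ)) by funext i; simp] at this
    rw [Matrix.mulVec_smul] at this
    calc A⁻¹ *ᵥ (fun _ => (1:ℝ)) = δ⁻¹ • (δ • (A⁻¹ *ᵥ fun _ => (1:ℝ))) := by
          rw [smul_smul, inv_mul_cancel₀ hδ, one_smul]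
      _ = δ⁻¹ • (fun _ => (1:ℝ)) := by rw [← this]
  have hsumu : ∑ i, u i = δ⁻¹ * ∑ i, vδ i := by
    have h5 := Matrix.dotProduct_mulVec vδ A⁻¹ (fun _ => (1:ℝ))
    rw [hAinv1] at h5
    have h6 : ∑ i, u i = (vδ ᵥ* A⁻¹) ⬝ᵥ (fun _ => (1:ℝ)) := by
      simp [dotProduct, hu]
    rw [h6, ← h5]
    simp [dotProduct, Finset.mul_sum, Finset.sum_mul, mul_comm]
  rw [hubM_eq, Matrix.vecMul_fromBlocks]
  have huA : u ᵥ* A = vδ := by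
    rw [hu, Matrix.vecMul_vecMul, hA.1, Matrix.vecMul_one]
  funext i
  rcases i with i | i
  · simp only [Sum.elim_inl, Sum.elim_inr, Sum.elim_comp_inl, Sum.elim_comp_inr]
    have h2 : (fun _ : Unit => (1:ℝ)) ᵥ* (Matrix.of fun _ j => -vδ j) = fun j => -vδ j := by
      funext j; simp [Matrix.vecMul, dotProduct]
    simp [← hAdef, huA, h2, Pi.add_apply]
  · simp only [Sum.elim_inl, Sum.elim_inr]
    have h3 : u ᵥ* (Matrix.of fun _ _ => -δ) = fun _ : Unit => -δ * ∑ i, u i := by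
      funext j
      show ∑ i, u i * (-δ) = -δ * ∑ i, u i
      rw [← Finset.sum_mul]; ring
    have h4 : (fun _ : Unit => (1:ℝ)) ᵥ* (Matrix.of fun _ _ => ∑ i, vδ i)
        = fun _ : Unit => ∑ i, vδ i := by
      funext j; simp [Matrix.vecMul, dotProduct]
    simp only [Sum.elim_inl, Sum.elim_inr, Sum.elim_comp_inl, Sum.elim_comp_inr] at *
    simp only [h3, h4, Pi.add_apply, Pi.zero_apply]
    rw [hsumu]
    field_simp
    ring

lemma exp_mulVec_of_kernel {m : Type*} [Fintype m] [DecidableEq m]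
    (B : Matrix m m ℝ) (w : m → ℝ) (h : B *ᵥ w = 0) :
    (NormedSpace.exp B) *ᵥ w = w := by
  letI : NormedRing (Matrix m m ℝ) := Matrix.linftyOpNormedRing
  letI : NormedAlgebra ℝ (Matrix m m ℝ) := Matrix.linftyOpNormedAlgebra
  have hsum : Summable fun k : ℕ => ((Nat.factorial k : ℝ))⁻¹ • B ^ k :=
    NormedSpace.expSeries_summable' B
  let f : Matrix m m ℝ →ₗ[ℝ] (m → ℝ) :=
    { toFun := fun A => A *ᵥ w
      map_add' := fun A C => Matrix.add_mulVec A C w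
      map_smul' := fun r A => Matrix.smul_mulVec r A w }
  have hf : Continuous f := LinearMap.continuous_of_finiteDimensional f
  have hker : ∀ k : ℕ, B ^ (k + 1) *ᵥ w = 0 := by
    intro k
    rw [pow_succ, ← Matrix.mulVec_mulVec, h, Matrix.mulVec_zero]
  have : (NormedSpace.exp B) *ᵥ w = ∑' k : ℕ, ((Nat.factorial k : ℝ))⁻¹ • (B ^ k *ᵥ w) := by
    rw [NormedSpace.exp_eq_tsum ℝ]
    have := (⟨f, hf⟩ : Matrix m m ℝ →L[ℝ] (m → ℝ)).map_tsum hsum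
    simpa [f, Matrix.smul_mulVec] using this
  rw [this, tsum_eq_single 0]
  · simp
  · intro k hk
    obtain ⟨j, rfl⟩ := Nat.exists_eq_succ_of_ne_zero hk
    simp [hker j]

lemma vecMul_exp_eq_self {m : Type*} [Fintype m] [DecidableEq m]
    (M : Matrix m m ℝ) (w : m → ℝ) (h : w ᵥ* M = 0) (t : ℝ) :
    w ᵥ* (NormedSpace.exp (-(t • M))) = w := by
  have hM : (-(t • M))ᵀ *ᵥ w = 0 := by
    rw [Matrix.transpose_neg, Matrix.transpose_smul, Matrix.neg_mulVec,
      Matrix.smul_mulVec, Matrix.mulVec_transpose, h]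
    simp
  have hexp := exp_mulVec_of_kernel ((-(t • M))ᵀ) w hM
  have h2 : w ᵥ* NormedSpace.exp (-(t • M)) = (NormedSpace.exp (-(t • M)))ᵀ *ᵥ w :=
    (Matrix.mulVec_transpose _ w).symm
  rw [h2, ← Matrix.exp_transpose]
  exact hexp

lemma sum_vecMul_inv (hrow : ∀ i, ∑ j, L i j = 0) {δ : ℝ} (hδ : δ ≠ 0) (vδ : Fin n → ℝ)
    (hA : (L + δ • 1)⁻¹ * (L + δ • 1) = 1 ∧ (L + δ • 1) * (L + δ • 1)⁻¹ = 1) :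
    ∑ i, (vδ ᵥ* (L + δ • 1)⁻¹) i = δ⁻¹ * ∑ i, vδ i := by
  set A : Matrix (Fin n) (Fin n) ℝ := L + δ • 1 with hAdef
  have hA1 : A *ᵥ (fun _ => (1:ℝ)) = fun _ => δ := by
    funext i
    show ∑ j, A i j * 1 = δ
    simp only [mul_one, hAdef, Matrix.add_apply, Matrix.smul_apply, smul_eq_mul]
    rw [Finset.sum_add_distrib, hrow i, zero_add]
    simp [Matrix.one_apply]
  have hAinv1 : A⁻¹ *ᵥ (fun _ => (1:ℝ)) = δ⁻¹ • (fun _ => (1:ℝ)) := by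
    have := congrArg (fun x => A⁻¹ *ᵥ x) hA1
    rw [Matrix.mulVec_mulVec, hA.1, Matrix.one_mulVec] at this
    rw [show (fun _ : Fin n => δ) = δ • (fun _ : Fin n => (1:ℝ)) by funext i; simp] at this
    rw [Matrix.mulVec_smul] at this
    calc A⁻¹ *ᵥ (fun _ => (1:ℝ)) = δ⁻¹ • (δ • (A⁻¹ *ᵥ fun _ => (1:ℝ))) := by
          rw [smul_smul, inv_mul_cancel₀ hδ, one_smul]
      _ = δ⁻¹ • (fun _ => (1:ℝ)) := by rw [← this]
  have h5 := Matrix.dotProduct_mulVec vδ A⁻¹ (fun _ => (1:ℝ))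
  rw [hAinv1] at h5
  have h6 : ∑ i, (vδ ᵥ* A⁻¹) i = (vδ ᵥ* A⁻¹) ⬝ᵥ (fun _ => (1:ℝ)) := by
    simp [dotProduct]
  rw [h6, ← h5]
  simp [dotProduct, Finset.mul_sum, Finset.sum_mul, mul_comm]

lemma consensus_value (hrow : ∀ i, ∑ j, L i j = 0) {δ : ℝ} (hδ : δ ≠ 0) (vδ : Fin n → ℝ)
    (hA : (L + δ • 1)⁻¹ * (L + δ • 1) = 1 ∧ (L + δ • 1) * (L + δ • 1)⁻¹ = 1)
    (y0 : (Fin n ⊕ Unit) → ℝ) (cδ : ℝ)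
    (hc : Tendsto (fun t : ℝ => (NormedSpace.exp (-(t • (hubL0 L + hubH δ vδ)))).mulVec y0)
      atTop (𝓝 (fun _ => cδ))) :
    cδ * (δ⁻¹ * (∑ i, vδ i) + 1)
      = (vδ ᵥ* (L + δ • 1)⁻¹) ⬝ᵥ (fun j => y0 (Sum.inl j)) + y0 (Sum.inr ()) := by
  set u : Fin n → ℝ := vδ ᵥ* (L + δ • 1)⁻¹ with hu
  set w : (Fin n ⊕ Unit) → ℝ := Sum.elim u (fun _ => 1) with hw
  have hwM := null_vecMul hrow hδ vδ hA
  have hconst : ∀ t : ℝ, w ⬝ᵥ ((NormedSpace.exp (-(t • (hubL0 L + hubH δ vδ)))).mulVec y0)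
      = w ⬝ᵥ y0 := by
    intro t
    rw [Matrix.dotProduct_mulVec, vecMul_exp_eq_self _ _ hwM t]
  have hcont : Continuous fun x : (Fin n ⊕ Unit) → ℝ => w ⬝ᵥ x :=
    continuous_const.dotProduct continuous_id
  have hlim : Tendsto
      (fun t : ℝ => w ⬝ᵥ ((NormedSpace.exp (-(t • (hubL0 L + hubH δ vδ)))).mulVec y0))
      atTop (𝓝 (w ⬝ᵥ (fun _ => cδ))) :=
    (hcont.tendsto _).comp hc
  have heq : w ⬝ᵥ y0 = w ⬝ᵥ (fun _ => cδ) :=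
    tendsto_nhds_unique (tendsto_const_nhds.congr fun t => (hconst t).symm) hlim
  have hsumu := sum_vecMul_inv hrow hδ vδ hA
  have hrhs : w ⬝ᵥ (fun _ => cδ) = cδ * (δ⁻¹ * (∑ i, vδ i) + 1) := by
    show ∑ i : Fin n ⊕ Unit, w i * cδ = _
    rw [Fintype.sum_sum_type]
    simp only [hw, Sum.elim_inl, Sum.elim_inr]
    rw [← Finset.sum_mul]
    simp [hu, hsumu]
    ring
  have hlhs : w ⬝ᵥ y0 = u ⬝ᵥ (fun j => y0 (Sum.inl j)) + y0 (Sum.inr ()) := by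
    show ∑ i : Fin n ⊕ Unit, w i * y0 i = _
    rw [Fintype.sum_sum_type]
    simp [hw, dotProduct]
  rw [← hrhs, ← heq, hlhs]

end Aux

/-- Consensus with a hub subordinate to the agents: if `δ/s(δ) → 0` and
`v(δ)/s(δ) → ṽ` as `δ → 0⁺`, and for each `δ > 0` the system reaches the
consensus `c(δ)·1′`, then `c(δ) → Σⱼ (ṽᵀJ̄)ⱼ y⁰ⱼ` as `δ → 0⁺`; in particular,
the initial state of the hub has no influence on the latent consensus. -/
theorem latent_consensus_subordinate_hub {n : ℕ}
    (L J : Matrix (Fin n) (Fin n) ℝ)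
    (hL : IsLaplacian L) (hJ : IsEigenprojection L J)
    (v : ℝ → Fin n → ℝ) (hv : ∀ δ : ℝ, 0 < δ → ∀ i, 0 ≤ v δ i)
    (hs : ∀ δ : ℝ, 0 < δ → 0 < ∑ i, v δ i)
    (hds : Tendsto (fun δ : ℝ => δ / ∑ i, v δ i) (𝓝[>] 0) (𝓝 0))
    (vt : Fin n → ℝ)
    (hvt : Tendsto (fun δ : ℝ => (∑ i, v δ i)⁻¹ • v δ) (𝓝[>] 0) (𝓝 vt))
    (y0 : (Fin n ⊕ Unit) → ℝ) (c : ℝ → ℝ)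
    (hc : ∀ δ : ℝ, 0 < δ →
      Tendsto
        (fun t : ℝ =>
          (NormedSpace.exp (-(t • (hubL0 L + hubH δ (v δ))))).mulVec y0)
        atTop (𝓝 (fun _ => c δ))) :
    Tendsto c (𝓝[>] 0) (𝓝 (∑ j, (vt ᵥ* J) j * y0 (Sum.inl j))) := by
  obtain ⟨hoff, hrow⟩ := hL
  have hker2 : ∀ x : Fin n → ℝ, L *ᵥ (L *ᵥ x) = 0 → L *ᵥ x = 0 :=
    fun x hx => laplacian_ker_sq ⟨hoff, hrow⟩ hx
  obtain ⟨hrange, hker⟩ := eigenproj_spec hker2 hJ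
  obtain ⟨hLJ, hJL, hU⟩ := eigen_matrix_facts hrange hker hJ.1
  have hres := resolvent_tendsto hLJ hJ.1 hJL hU
  have hg : Tendsto (fun δ : ℝ => ((∑ i, v δ i)⁻¹ • v δ) ᵥ* (δ • (L + δ • 1)⁻¹)) (𝓝[>] 0)
      (𝓝 (vt ᵥ* J)) := by
    have hpair : Tendsto (fun δ : ℝ => (((∑ i, v δ i)⁻¹ • v δ), δ • (L + δ • 1)⁻¹)) (𝓝[>] 0)
        (𝓝 (vt, J)) := hvt.prodMk_nhds hres
    have hcont : Continuous fun p : (Fin n → ℝ) × Matrix (Fin n) (Fin n) ℝ => p.1 ᵥ* p.2 :=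
      continuous_fst.matrix_vecMul continuous_snd
    exact (hcont.tendsto _).comp hpair
  have hFlim : Tendsto (fun δ : ℝ =>
      ((((∑ i, v δ i)⁻¹ • v δ) ᵥ* (δ • (L + δ • 1)⁻¹)) ⬝ᵥ (fun j => y0 (Sum.inl j))
          + (δ / ∑ i, v δ i) * y0 (Sum.inr ())) / (1 + δ / ∑ i, v δ i))
      (𝓝[>] 0) (𝓝 (∑ j, (vt ᵥ* J) j * y0 (Sum.inl j))) := by
    have hnum1 : Tendsto (fun δ : ℝ =>
        (((∑ i, v δ i)⁻¹ • v δ) ᵥ* (δ • (L + δ • 1)⁻¹)) ⬝ᵥ (fun j => y0 (Sum.inl j)))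
        (𝓝[>] 0) (𝓝 ((vt ᵥ* J) ⬝ᵥ (fun j => y0 (Sum.inl j)))) := by
      have hcont : Continuous fun x : Fin n → ℝ => x ⬝ᵥ (fun j => y0 (Sum.inl j)) :=
        continuous_id.dotProduct continuous_const
      exact (hcont.tendsto _).comp hg
    have hnum2 := hds.mul_const (y0 (Sum.inr ()))
    have hden : Tendsto (fun δ : ℝ => 1 + δ / ∑ i, v δ i) (𝓝[>] 0) (𝓝 (1 + 0)) :=
      tendsto_const_nhds.add hds
    have := (hnum1.add hnum2).div hden (by norm_num)
    simpa [dotProduct, Pi.div_def] using this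
  apply hFlim.congr'
  filter_upwards [det_unit_eventually hU, self_mem_nhdsWithin] with δ hdet hδ'
  rw [Set.mem_Ioi] at hδ'
  have hδ0 : (δ:ℝ) ≠ 0 := hδ'.ne'
  have hsδ : 0 < ∑ i, v δ i := hs δ hδ'
  have hd1 : (1:ℝ) + δ ≠ 0 := by positivity
  have h1 := resolvent_eq hLJ hJ.1 hJL hδ0 hd1 hdet
  have hAinv : (L + δ • (1 : Matrix (Fin n) (Fin n) ℝ))⁻¹
      = δ⁻¹ • J + (L + J + δ • 1)⁻¹ * (1 - J) := Matrix.inv_eq_right_inv h1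
  have hA2 : (L + δ • (1 : Matrix (Fin n) (Fin n) ℝ)) * (L + δ • 1)⁻¹ = 1 := by
    rw [hAinv]; exact h1
  have hA : (L + δ • (1 : Matrix (Fin n) (Fin n) ℝ))⁻¹ * (L + δ • 1) = 1
      ∧ (L + δ • (1 : Matrix (Fin n) (Fin n) ℝ)) * (L + δ • 1)⁻¹ = 1 :=
    ⟨mul_eq_one_comm.mp hA2, hA2⟩
  have key := consensus_value hrow hδ0 (v δ) hA y0 (c δ) (hc δ hδ')
  set s : ℝ := ∑ i, v δ i with hsdef
  set u : Fin n → ℝ := v δ ᵥ* (L + δ • 1)⁻¹ with hudef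
  have hgδ : ((s⁻¹ • v δ) ᵥ* (δ • (L + δ • 1)⁻¹)) = (s⁻¹ * δ) • u := by
    funext j
    simp only [hudef, Matrix.vecMul, dotProduct, Pi.smul_apply, Matrix.smul_apply,
      smul_eq_mul, Finset.mul_sum]
    exact Finset.sum_congr rfl fun i _ => by ring
  have hgdot : ((s⁻¹ • v δ) ᵥ* (δ • (L + δ • 1)⁻¹)) ⬝ᵥ (fun j => y0 (Sum.inl j))
      = (s⁻¹ * δ) * (u ⬝ᵥ (fun j => y0 (Sum.inl j))) := by
    rw [hgδ, smul_dotProduct, smul_eq_mul]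
  rw [hgdot]
  set U : ℝ := u ⬝ᵥ (fun j => y0 (Sum.inl j)) with hUdef
  set Y : ℝ := y0 (Sum.inr ()) with hYdef
  have hden : (1:ℝ) + δ / s ≠ 0 := by positivity
  rw [div_eq_iff hden]
  -- key : c δ * (δ⁻¹ * s + 1) = U + Y
  field_simp at key ⊢
  nlinarith [key]
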